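/- Suppose an n×m integer matrix A factors as A = L₁·[[I_{a,b}, 0],[0, A']]·U₁ where L₁, U₁ are invertible over ℤ, and A' factors as A' = L₂·D̃'·U₂ with L₂, U₂ invertible over ℤ and D̃' a defective identity. Then A = L·D̃·U with L = L₁·diag(I_a, L₂), U = diag(I_b, U₂)·U₁ both invertible over ℤ, and D̃ = [[I_{a,b}, 0],[0, D̃']] a defective identity matrix. -/

import Mathlib

/-- The `p × q` "defective identity" matrix with `(i,j)` entry `1` if `i = j` and `0` otherwise. -/
def defId (R : Type*) [CommRing R] (p q : ℕ) : Matrix (Fin p) (Fin q) R :=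
  Matrix.of fun i j => if (i : ℕ) = (j : ℕ) then 1 else 0

/-- Defective identity, for `Fin`-indexed matrices. -/
def IsDefId {b w : ℕ} (D : Matrix (Fin b) (Fin w) ℤ) : Prop :=
  (∀ i j, D i j = 0 ∨ D i j = 1) ∧
  ∀ i j i' j', D i j = 1 → D i' j' = 1 →
    (i = i' ∧ j = j') ∨ (i < i' ∧ j < j') ∨ (i' < i ∧ j' < j)

/-- The natural linear order on a block index `Fin p ⊕ Fin q` (first block before second). -/
def sidx {p q : ℕ} : Fin p ⊕ Fin q → ℕ := Sum.elim Fin.val fun j => p + j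

/-- Defective identity, for block (sum-indexed) matrices, with rows and columns ordered so
that the first block comes first. -/
def IsDefIdS {a a' b b' : ℕ} (D : Matrix (Fin a ⊕ Fin a') (Fin b ⊕ Fin b') ℤ) : Prop :=
  (∀ i j, D i j = 0 ∨ D i j = 1) ∧
  ∀ i j i' j', D i j = 1 → D i' j' = 1 →
    (i = i' ∧ j = j') ∨ (sidx i < sidx i' ∧ sidx j < sidx j') ∨
      (sidx i' < sidx i ∧ sidx j' < sidx j)

theorem stmt16 {a a' b b' : ℕ}
    (A : Matrix (Fin a ⊕ Fin a') (Fin b ⊕ Fin b') ℤ)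
    (L₁ : Matrix (Fin a ⊕ Fin a') (Fin a ⊕ Fin a') ℤ)
    (U₁ : Matrix (Fin b ⊕ Fin b') (Fin b ⊕ Fin b') ℤ)
    (A' : Matrix (Fin a') (Fin b') ℤ)
    (L₂ : Matrix (Fin a') (Fin a') ℤ) (D' : Matrix (Fin a') (Fin b') ℤ)
    (U₂ : Matrix (Fin b') (Fin b') ℤ)
    (hA : A = L₁ * Matrix.fromBlocks (defId ℤ a b) 0 0 A' * U₁)
    (hL₁ : IsUnit L₁.det) (hU₁ : IsUnit U₁.det)
    (hA' : A' = L₂ * D' * U₂)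
    (hL₂ : IsUnit L₂.det) (hU₂ : IsUnit U₂.det) (hD' : IsDefId D') :
    A = (L₁ * Matrix.fromBlocks 1 0 0 L₂) *
          Matrix.fromBlocks (defId ℤ a b) 0 0 D' *
          (Matrix.fromBlocks 1 0 0 U₂ * U₁) ∧
      IsUnit (L₁ * Matrix.fromBlocks 1 0 0 L₂).det ∧
      IsUnit (Matrix.fromBlocks 1 0 0 U₂ * U₁).det ∧
      IsDefIdS (Matrix.fromBlocks (defId ℤ a b) 0 0 D') := by
  have key : Matrix.fromBlocks (defId ℤ a b) 0 0 (L₂ * D' * U₂)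
      = Matrix.fromBlocks (1 : Matrix (Fin a) (Fin a) ℤ) 0 0 L₂ * Matrix.fromBlocks (defId ℤ a b) 0 0 D'
        * Matrix.fromBlocks (1 : Matrix (Fin b) (Fin b) ℤ) 0 0 U₂ := by
    simp [Matrix.fromBlocks_multiply, Matrix.mul_assoc]
  refine ⟨?_, ?_, ?_, ?_⟩
  · rw [hA, hA', key]
    simp only [Matrix.mul_assoc]
  · rw [Matrix.det_mul, Matrix.det_fromBlocks_zero₂₁]
    simpa using hL₁.mul hL₂
  · rw [Matrix.det_mul, Matrix.det_fromBlocks_zero₂₁]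
    simpa using hU₂.mul hU₁
  · obtain ⟨h01, hord⟩ := hD'
    have hd : ∀ (i : Fin a) (j : Fin b),
        defId ℤ a b i j = if (i : ℕ) = (j : ℕ) then 1 else 0 := fun i j => rfl
    constructor
    · rintro (i | i) (j | j)
      · rw [Matrix.fromBlocks_apply₁₁, hd]; split <;> simp
      · simp [Matrix.fromBlocks_apply₁₂]
      · simp [Matrix.fromBlocks_apply₂₁]
      · rw [Matrix.fromBlocks_apply₂₂]; exact h01 i j
    · rintro (i | i) (j | j) (i' | i') (j' | j') h h' <;>
        simp only [Matrix.fromBlocks_apply₁₁, Matrix.fromBlocks_apply₁₂,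
          Matrix.fromBlocks_apply₂₁, Matrix.fromBlocks_apply₂₂,
          Matrix.zero_apply, hd, sidx, Sum.elim_inl, Sum.elim_inr] at h h' ⊢
      all_goals try (exfalso; omega)
      · -- 11 11
        have h1 : (i : ℕ) = j := by by_contra hc; simp [hc] at h
        have h2 : (i' : ℕ) = j' := by by_contra hc; simp [hc] at h'
        rcases lt_trichotomy (i : ℕ) (i' : ℕ) with hlt | heq | hgt
        · exact Or.inr (Or.inl ⟨hlt, by omega⟩)
        · refine Or.inl ⟨congrArg Sum.inl (Fin.ext heq), congrArg Sum.inl (Fin.ext ?_)⟩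
          omega
        · exact Or.inr (Or.inr ⟨hgt, by omega⟩)
      · -- 11 22
        have hi := i.isLt
        have h1 : (i : ℕ) = j := by by_contra hc; simp [hc] at h
        have hj := j.isLt
        exact Or.inr (Or.inl ⟨by omega, by omega⟩)
      · -- 22 11
        have hi := i'.isLt
        have h1 : (i' : ℕ) = j' := by by_contra hc; simp [hc] at h'
        have hj := j'.isLt
        exact Or.inr (Or.inr ⟨by omega, by omega⟩)
      · -- 22 22
        rcases hord i j i' j' h h' with ⟨hi, hj⟩ | ⟨hi, hj⟩ | ⟨hi, hj⟩
        · exact Or.inl ⟨congrArg Sum.inr hi, congrArg Sum.inr hj⟩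
        · have hi' : (i : ℕ) < i' := hi
          have hj' : (j : ℕ) < j' := hj
          exact Or.inr (Or.inl ⟨by omega, by omega⟩)
        · have hi' : (i' : ℕ) < i := hi
          have hj' : (j' : ℕ) < j := hj
          exact Or.inr (Or.inr ⟨by omega, by omega⟩)
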